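/- arXiv:math/9411209 — 2 statements merged into one kernel-verified Lean document; each statement's English description precedes it below -/
import Mathlib

section
/- Let F ⊆ A. Then F is a SAGBI basis for A if and only if every nonzero a ∈ A has a SAGBI representation with respect to F, i.e., a representation a = Σ_{i=1}^N r_i·F^{e_i} with r_i ∈ R and F-power products F^{e_i} such that max_i lp(F^{e_i}) = lp(a). -/
open MvPolynomial

/-- A term order on the monomials (exponent vectors) of a polynomial ring in `n`
variables: a well-founded linear order compatible with multiplication of power
products (i.e. with addition of exponent vectors). -/
structure TermOrder (n : ℕ) where
  lo : LinearOrder (Fin n →₀ ℕ)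
  wf : WellFounded lo.lt
  add_le_add : ∀ a b c : Fin n →₀ ℕ, lo.le a b → lo.le (a + c) (b + c)

namespace TermOrder

variable {n : ℕ} {R : Type*} [CommRing R]

/-- `lp p`: the leading power product (exponent vector) of `p`; junk value `0`
for the zero polynomial. -/
noncomputable def lp (ord : TermOrder n) (p : MvPolynomial (Fin n) R) : Fin n →₀ ℕ :=
  WithBot.unbotD 0 (@Finset.max _ ord.lo p.support)

/-- `lc p`: the leading coefficient of `p` (0 if `p = 0`). -/
noncomputable def lc (ord : TermOrder n) (p : MvPolynomial (Fin n) R) : R :=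
  p.coeff (ord.lp p)

/-- `ltm p`: the leading term `lc(p)·lp(p)` of `p` (0 if `p = 0`). -/
noncomputable def ltm (ord : TermOrder n) (p : MvPolynomial (Fin n) R) : MvPolynomial (Fin n) R :=
  monomial (ord.lp p) (ord.lc p)

end TermOrder

variable {n : ℕ} {R : Type*} [CommRing R]

/-- An `F`-power product: a finite product `∏ fᵢ^{eᵢ}` with `fᵢ ∈ F`. -/
def IsPowerProduct (F : Set (MvPolynomial (Fin n) R)) (q : MvPolynomial (Fin n) R) : Prop :=
  ∃ e : MvPolynomial (Fin n) R →₀ ℕ, (e.support : Set (MvPolynomial (Fin n) R)) ⊆ F ∧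
    q = e.prod (fun f k => f ^ k)

/-- `F` is a SAGBI basis for the `R`-subalgebra `A`: `R[Lt A] = R[Lt F]`. -/
def IsSAGBI (ord : TermOrder n) (A : Subalgebra R (MvPolynomial (Fin n) R))
    (F : Set (MvPolynomial (Fin n) R)) : Prop :=
  Algebra.adjoin R (ord.ltm '' (A : Set (MvPolynomial (Fin n) R))) =
    Algebra.adjoin R (ord.ltm '' F)

/-- One step of s-reduction of `g` to `h` via `F`. -/
def SStep (ord : TermOrder n) (F : Set (MvPolynomial (Fin n) R))
    (g h : MvPolynomial (Fin n) R) : Prop :=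
  ∃ (β : Fin n →₀ ℕ) (N : ℕ) (q : Fin N → MvPolynomial (Fin n) R) (r : Fin N → R),
    g.coeff β ≠ 0 ∧
    (∀ i, IsPowerProduct F (q i) ∧ q i ≠ 0 ∧ ord.lp (q i) = β) ∧
    g.coeff β = ∑ i, r i * ord.lc (q i) ∧
    h = g - ∑ i, C (r i) * q i

/-- `g` s-reduces to `h` via `F`: a finite chain of one-step s-reductions. -/
def SReduce (ord : TermOrder n) (F : Set (MvPolynomial (Fin n) R)) :
    MvPolynomial (Fin n) R → MvPolynomial (Fin n) R → Prop :=
  Relation.ReflTransGen (SStep ord F)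

/-- One step of si-reduction of `h` to `h'` via `G`, relative to the subalgebra `A`. -/
def SiStep (ord : TermOrder n) (A : Subalgebra R (MvPolynomial (Fin n) R))
    (G : Set (MvPolynomial (Fin n) R)) (h h' : MvPolynomial (Fin n) R) : Prop :=
  ∃ (α : Fin n →₀ ℕ) (M : ℕ) (g a : Fin M → MvPolynomial (Fin n) R),
    h.coeff α ≠ 0 ∧
    (∀ i, g i ∈ G) ∧ (∀ i, a i ∈ A) ∧
    (∀ i, a i * g i ≠ 0 ∧ ord.lp (a i * g i) = α) ∧
    (monomial α (h.coeff α) : MvPolynomial (Fin n) R) = ∑ i, ord.ltm (a i * g i) ∧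
    h' = h - ∑ i, a i * g i

/-- `h` si-reduces to `h'` via `G`: a finite chain of one-step si-reductions. -/
def SiReduce (ord : TermOrder n) (A : Subalgebra R (MvPolynomial (Fin n) R))
    (G : Set (MvPolynomial (Fin n) R)) :
    MvPolynomial (Fin n) R → MvPolynomial (Fin n) R → Prop :=
  Relation.ReflTransGen (SiStep ord A G)

/-- The subalgebra `R[Lt A]` generated by the leading terms of elements of `A`. -/
noncomputable def LtAlg (ord : TermOrder n) (A : Subalgebra R (MvPolynomial (Fin n) R)) :
    Subalgebra R (MvPolynomial (Fin n) R) :=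
  Algebra.adjoin R (ord.ltm '' (A : Set (MvPolynomial (Fin n) R)))

/-- The leading term of an element of `A`, as an element of `R[Lt A]`. -/
noncomputable def ltA (ord : TermOrder n) (A : Subalgebra R (MvPolynomial (Fin n) R))
    (a : A) : LtAlg ord A :=
  ⟨ord.ltm (a : MvPolynomial (Fin n) R), Algebra.subset_adjoin ⟨a, a.2, rfl⟩⟩

/-- `G ⊆ I` is a SAGBI–Gröbner basis (SG-basis) for the ideal `I` of `A`:
`Lt G` generates the ideal `⟨Lt I⟩` in the subalgebra `R[Lt A]`. -/
def IsSGBasis (ord : TermOrder n) (A : Subalgebra R (MvPolynomial (Fin n) R))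
    (I : Ideal A) (G : Set A) : Prop :=
  Ideal.span
      ((Subtype.val ⁻¹' (ord.ltm '' (Subtype.val '' G)) : Set (LtAlg ord A))) =
  Ideal.span
      ((Subtype.val ⁻¹' (ord.ltm '' (Subtype.val '' (I : Set A))) : Set (LtAlg ord A)))

namespace SagbiAux

open TermOrder

variable {n : ℕ} {R : Type*} [CommRing R] (ord : TermOrder n)

/-! ### Order helper lemmas for `ord.lo` (avoiding the ambient pointwise order) -/

theorem lo_le_of_lt {a b : Fin n →₀ ℕ} (h : ord.lo.lt a b) : ord.lo.le a b :=
  @le_of_lt _ ord.lo.toPartialOrder.toPreorder a b h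

theorem lo_lt_of_le_of_ne {a b : Fin n →₀ ℕ} (h1 : ord.lo.le a b) (h2 : a ≠ b) :
    ord.lo.lt a b := @lt_of_le_of_ne _ ord.lo.toPartialOrder a b h1 h2

theorem lo_not_le_of_lt {a b : Fin n →₀ ℕ} (h : ord.lo.lt a b) : ¬ ord.lo.le b a :=
  @not_le_of_gt _ ord.lo.toPartialOrder.toPreorder _ _ h

theorem lo_eq_or_lt_of_le {a b : Fin n →₀ ℕ} (h : ord.lo.le a b) : a = b ∨ ord.lo.lt a b :=
  @eq_or_lt_of_le _ ord.lo.toPartialOrder a b h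

theorem lo_lt_of_not_le {a b : Fin n →₀ ℕ} (h : ¬ ord.lo.le a b) : ord.lo.lt b a :=
  @lt_of_not_ge _ ord.lo _ _ h

theorem lo_lt_of_lt_of_le {a b c : Fin n →₀ ℕ} (h1 : ord.lo.lt a b) (h2 : ord.lo.le b c) :
    ord.lo.lt a c := @lt_of_lt_of_le _ ord.lo.toPartialOrder.toPreorder a b c h1 h2

theorem lo_lt_irrefl {a : Fin n →₀ ℕ} (h : ord.lo.lt a a) : False :=
  @lt_irrefl _ ord.lo.toPartialOrder.toPreorder a h

/-! ### Basic facts about `lp`, `lc`, `ltm` -/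

theorem lp_eq_max' {p : MvPolynomial (Fin n) R} (hp : p ≠ 0) :
    ord.lp p = @Finset.max' _ ord.lo p.support
      (MvPolynomial.support_nonempty.mpr hp) := by
  have h := @Finset.coe_max' _ ord.lo p.support (MvPolynomial.support_nonempty.mpr hp)
  unfold TermOrder.lp
  rw [← h]
  rfl

theorem lp_mem {p : MvPolynomial (Fin n) R} (hp : p ≠ 0) : ord.lp p ∈ p.support := by
  rw [lp_eq_max' ord hp]
  exact @Finset.max'_mem _ ord.lo _ _

theorem lc_ne_zero {p : MvPolynomial (Fin n) R} (hp : p ≠ 0) : ord.lc p ≠ 0 := by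
  have := lp_mem ord hp
  rwa [MvPolynomial.mem_support_iff] at this

theorem le_lp {p : MvPolynomial (Fin n) R} {β : Fin n →₀ ℕ} (hβ : β ∈ p.support) :
    ord.lo.le β (ord.lp p) := by
  have hp : p ≠ 0 := by
    intro h; subst h; simp at hβ
  rw [lp_eq_max' ord hp]
  exact @Finset.le_max' _ ord.lo _ _ hβ

theorem coeff_eq_zero_of_lp_lt {p : MvPolynomial (Fin n) R} {β : Fin n →₀ ℕ}
    (h : ord.lo.lt (ord.lp p) β) : p.coeff β = 0 := by
  by_contra hc
  exact absurd (le_lp ord (MvPolynomial.mem_support_iff.mpr hc)) (lo_not_le_of_lt ord h)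

theorem lo_add_lt_add {a b c : Fin n →₀ ℕ} (h : ord.lo.lt a b) :
    ord.lo.lt (a + c) (b + c) := by
  refine lo_lt_of_le_of_ne ord (ord.add_le_add a b c (lo_le_of_lt ord h)) ?_
  intro he
  have : a = b := add_right_cancel he
  subst this
  exact lo_lt_irrefl ord h

theorem ltm_ne_zero {p : MvPolynomial (Fin n) R} (hp : p ≠ 0) : ord.ltm p ≠ 0 := by
  rw [TermOrder.ltm, Ne, MvPolynomial.monomial_eq_zero]
  exact lc_ne_zero ord hp

section Domain

variable [IsDomain R]

theorem coeff_mul_lp_add_lp {p q : MvPolynomial (Fin n) R} (hp : p ≠ 0) (hq : q ≠ 0) :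
    (p * q).coeff (ord.lp p + ord.lp q) = ord.lc p * ord.lc q := by
  classical
  rw [MvPolynomial.coeff_mul]
  rw [Finset.sum_eq_single (ord.lp p, ord.lp q)]
  · simp only [TermOrder.lc]
  · rintro ⟨a, b⟩ hab hne
    rw [Finset.HasAntidiagonal.mem_antidiagonal] at hab
    by_contra hc
    have ha : a ∈ p.support := by
      rw [MvPolynomial.mem_support_iff]; intro h; apply hc; rw [h, zero_mul]
    have hb : b ∈ q.support := by
      rw [MvPolynomial.mem_support_iff]; intro h; apply hc; rw [h, mul_zero]
    have hale := le_lp ord ha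
    have hble := le_lp ord hb
    rcases lo_eq_or_lt_of_le ord hale with he | hlt
    · apply hne
      have hb' : b = ord.lp q := by
        have h2 := hab; rw [he] at h2
        exact add_left_cancel h2
      rw [he, hb']
    · have h1 : ord.lo.lt (a + b) (ord.lp p + b) := lo_add_lt_add ord hlt
      have h2 : ord.lo.le (ord.lp p + b) (ord.lp p + ord.lp q) := by
        rw [add_comm (ord.lp p) b, add_comm (ord.lp p) (ord.lp q)]
        exact ord.add_le_add _ _ _ hble
      rw [hab] at h1
      exact lo_lt_irrefl ord (lo_lt_of_lt_of_le ord h1 h2)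
  · intro h
    simp [Finset.mem_antidiagonal] at h

theorem lp_mul {p q : MvPolynomial (Fin n) R} (hp : p ≠ 0) (hq : q ≠ 0) :
    ord.lp (p * q) = ord.lp p + ord.lp q := by
  classical
  have hpq : p * q ≠ 0 := mul_ne_zero hp hq
  have h1 : ord.lo.le (ord.lp (p * q)) (ord.lp p + ord.lp q) := by
    have hmem := MvPolynomial.support_mul p q (lp_mem ord hpq)
    rw [Finset.mem_add] at hmem
    obtain ⟨a, ha, b, hb, hab⟩ := hmem
    have s1 : ord.lo.le (a + b) (ord.lp p + b) := ord.add_le_add _ _ _ (le_lp ord ha)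
    have s2 : ord.lo.le (ord.lp p + b) (ord.lp p + ord.lp q) := by
      rw [add_comm (ord.lp p) b, add_comm (ord.lp p) (ord.lp q)]
      exact ord.add_le_add _ _ _ (le_lp ord hb)
    rw [← hab]
    exact ord.lo.le_trans _ _ _ s1 s2
  have h2 : ord.lo.le (ord.lp p + ord.lp q) (ord.lp (p * q)) := by
    apply le_lp ord
    rw [MvPolynomial.mem_support_iff, coeff_mul_lp_add_lp ord hp hq]
    exact mul_ne_zero (lc_ne_zero ord hp) (lc_ne_zero ord hq)
  exact ord.lo.le_antisymm _ _ h1 h2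

theorem lc_mul {p q : MvPolynomial (Fin n) R} (hp : p ≠ 0) (hq : q ≠ 0) :
    ord.lc (p * q) = ord.lc p * ord.lc q := by
  rw [TermOrder.lc, lp_mul ord hp hq, coeff_mul_lp_add_lp ord hp hq]

theorem ltm_mul {p q : MvPolynomial (Fin n) R} (hp : p ≠ 0) (hq : q ≠ 0) :
    ord.ltm (p * q) = ord.ltm p * ord.ltm q := by
  rw [TermOrder.ltm, TermOrder.ltm, TermOrder.ltm, MvPolynomial.monomial_mul,
    lp_mul ord hp hq, lc_mul ord hp hq]

theorem ltm_one : ord.ltm (1 : MvPolynomial (Fin n) R) = 1 := by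
  classical
  have hs : (1 : MvPolynomial (Fin n) R).support = {0} := by
    rw [show (1 : MvPolynomial (Fin n) R) = MvPolynomial.monomial 0 1 by
      simp [MvPolynomial.monomial_zero']]
    rw [MvPolynomial.support_monomial]
    simp
  have hlp : ord.lp (1 : MvPolynomial (Fin n) R) = 0 := by
    unfold TermOrder.lp
    rw [hs, @Finset.max_singleton _ ord.lo]
    rfl
  rw [TermOrder.ltm, hlp, TermOrder.lc, hlp]
  simp [MvPolynomial.monomial_zero']

theorem ltm_pow {p : MvPolynomial (Fin n) R} (hp : p ≠ 0) (k : ℕ) :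
    ord.ltm (p ^ k) = ord.ltm p ^ k := by
  induction k with
  | zero => simpa using ltm_one ord
  | succ k ih =>
      rw [pow_succ, pow_succ, ltm_mul ord (pow_ne_zero k hp) hp, ih]

end Domain

theorem isPP_one {F : Set (MvPolynomial (Fin n) R)} : IsPowerProduct F 1 :=
  ⟨0, by simp, by simp⟩

theorem isPP_self {F : Set (MvPolynomial (Fin n) R)} {f : MvPolynomial (Fin n) R}
    (hf : f ∈ F) : IsPowerProduct F f := by
  classical
  refine ⟨Finsupp.single f 1, ?_, ?_⟩
  · rw [Finsupp.support_single_ne_zero f one_ne_zero]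
    simpa using hf
  · rw [Finsupp.prod_single_index (by simp)]
    simp

theorem isPP_mul {F : Set (MvPolynomial (Fin n) R)} {p q : MvPolynomial (Fin n) R}
    (hp : IsPowerProduct F p) (hq : IsPowerProduct F q) : IsPowerProduct F (p * q) := by
  classical
  obtain ⟨e1, hs1, rfl⟩ := hp
  obtain ⟨e2, hs2, rfl⟩ := hq
  refine ⟨e1 + e2, ?_, ?_⟩
  · refine subset_trans ?_ (Set.union_subset hs1 hs2)
    intro x hx
    have := Finsupp.support_add (g₁ := e1) (g₂ := e2) hx
    simpa using this
  · rw [Finsupp.prod_add_index (by intros; rfl) (by intros; rw [pow_add])]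

theorem isPP_mem {F : Set (MvPolynomial (Fin n) R)} {A : Subalgebra R (MvPolynomial (Fin n) R)}
    (hFA : F ⊆ (A : Set (MvPolynomial (Fin n) R))) {q : MvPolynomial (Fin n) R}
    (hq : IsPowerProduct F q) : q ∈ A := by
  obtain ⟨e, hs, rfl⟩ := hq
  exact prod_mem fun f hf => pow_mem (hFA (hs hf)) _

section DomainPP

variable [IsDomain R] {F : Set (MvPolynomial (Fin n) R)}

theorem ltm_pp_mem_closure {q : MvPolynomial (Fin n) R} (hq : IsPowerProduct F q)
    (h0 : q ≠ 0) : ord.ltm q ∈ Submonoid.closure (ord.ltm '' F) := by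
  classical
  obtain ⟨e, hs, rfl⟩ := hq
  induction e using Finsupp.induction with
  | zero =>
      rw [Finsupp.prod_zero_index]
      rw [ltm_one ord]
      exact one_mem _
  | single_add a b f ha hb ih =>
      rw [Finsupp.prod_add_index (by intros; rfl) (by intros; rw [pow_add])] at h0 ⊢
      rw [Finsupp.prod_single_index (by simp)] at h0 ⊢
      have hsupp : ((Finsupp.single a b + f).support : Set (MvPolynomial (Fin n) R)) =
          {a} ∪ (f.support : Set (MvPolynomial (Fin n) R)) := by
        rw [Finsupp.support_add_eq, Finsupp.support_single_ne_zero a hb]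
        · simp
        · rw [Finsupp.support_single_ne_zero a hb]
          simpa using ha
      rw [hsupp] at hs
      have haF : a ∈ F := hs (by simp)
      have hfF : (f.support : Set (MvPolynomial (Fin n) R)) ⊆ F :=
        subset_trans Set.subset_union_right hs
      have h1 : a ^ b ≠ 0 := left_ne_zero_of_mul h0
      have h2 : f.prod (fun g k => g ^ k) ≠ 0 := right_ne_zero_of_mul h0
      have ha0 : a ≠ 0 := by
        intro h; subst h; exact h1 (zero_pow hb)
      rw [ltm_mul ord h1 h2, ltm_pow ord ha0]
      refine mul_mem (pow_mem (Submonoid.subset_closure ?_) b) (ih hfF h2)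
      exact ⟨a, haF, rfl⟩

theorem closure_elem {m : MvPolynomial (Fin n) R}
    (hm : m ∈ Submonoid.closure (ord.ltm '' F)) :
    m = 0 ∨ ∃ p, IsPowerProduct F p ∧ p ≠ 0 ∧ ord.ltm p = m := by
  refine Submonoid.closure_induction
    (motive := fun m _ => m = 0 ∨ ∃ p, IsPowerProduct F p ∧ p ≠ 0 ∧ ord.ltm p = m)
    ?_ ?_ ?_ hm
  · rintro x ⟨f, hf, rfl⟩
    by_cases h : f = 0
    · left; subst h
      rw [TermOrder.ltm, MvPolynomial.monomial_eq_zero]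
      rfl
    · right; exact ⟨f, isPP_self hf, h, rfl⟩
  · right; exact ⟨1, isPP_one, one_ne_zero, ltm_one ord⟩
  · rintro x y _ _ (rfl | ⟨p, hp, hp0, rfl⟩) ihy
    · left; rw [zero_mul]
    rcases ihy with rfl | ⟨p', hp', hp'0, rfl⟩
    · left; rw [mul_zero]
    right
    exact ⟨p * p', isPP_mul hp hp', mul_ne_zero hp0 hp'0, ltm_mul ord hp0 hp'0⟩

end DomainPP

end SagbiAux
namespace SagbiAux

open TermOrder

variable {n : ℕ} {R : Type*} [CommRing R] (ord : TermOrder n)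

theorem ltm_zero : ord.ltm (0 : MvPolynomial (Fin n) R) = 0 := by
  rw [TermOrder.ltm, MvPolynomial.monomial_eq_zero]
  rfl

theorem C_mul_mem {A : Subalgebra R (MvPolynomial (Fin n) R)} {x : MvPolynomial (Fin n) R}
    (hx : x ∈ A) (r : R) : MvPolynomial.C r * x ∈ A := by
  rw [← MvPolynomial.smul_eq_C_mul]
  exact A.smul_mem hx r

theorem key_step [IsDomain R] {A : Subalgebra R (MvPolynomial (Fin n) R)}
    {F : Set (MvPolynomial (Fin n) R)} (hS : IsSAGBI ord A F)
    {a : MvPolynomial (Fin n) R} (ha : a ∈ A) (h0 : a ≠ 0) :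
    ∃ (N : ℕ) (r : Fin N → R) (q : Fin N → MvPolynomial (Fin n) R),
      0 < N ∧ (∀ i, IsPowerProduct F (q i) ∧ ord.lp (q i) = ord.lp a) ∧
      (∀ β : Fin n →₀ ℕ, ord.lo.le (ord.lp a) β →
        (a - ∑ i, MvPolynomial.C (r i) * q i).coeff β = 0) := by
  classical
  set α := ord.lp a with hα
  have hmem : ord.ltm a ∈ Algebra.adjoin R (ord.ltm '' F) := by
    rw [← hS]
    exact Algebra.subset_adjoin ⟨a, ha, rfl⟩
  have hmem2 : ord.ltm a ∈ Submodule.span R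
      ((Submonoid.closure (ord.ltm '' F) : Submonoid (MvPolynomial (Fin n) R)) :
        Set (MvPolynomial (Fin n) R)) := by
    have := Algebra.adjoin_eq_span R (ord.ltm '' F)
    rw [← Subalgebra.mem_toSubmodule, this] at hmem
    exact hmem
  obtain ⟨c, hcs, hcsum⟩ := Submodule.mem_span_set.mp hmem2
  set P : MvPolynomial (Fin n) R → Prop :=
    fun m => ∃ p, IsPowerProduct F p ∧ p ≠ 0 ∧ ord.ltm p = m ∧ ord.lp p = α with hP
  set s1 : Finset (MvPolynomial (Fin n) R) := c.support.filter P with hs1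
  have hQex : ∀ m : {x // x ∈ s1}, ∃ p, IsPowerProduct F p ∧ p ≠ 0 ∧
      ord.ltm p = (m : MvPolynomial (Fin n) R) ∧ ord.lp p = α :=
    fun m => (Finset.mem_filter.mp m.2).2
  choose Q hQ1 hQ2 hQ3 hQ4 using hQex
  -- coefficient at α of polynomials outside s1 vanishes
  have hout : ∀ m ∈ c.support, m ∉ s1 → m.coeff α = 0 := by
    intro m hm hns
    rcases closure_elem ord (hcs hm) with rfl | ⟨p, hp1, hp2, hp3⟩
    · simp
    · subst hp3
      rw [TermOrder.ltm, MvPolynomial.coeff_monomial]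
      split_ifs with he
      · exact absurd (Finset.mem_filter.mpr ⟨hm, ⟨p, hp1, hp2, rfl, he⟩⟩) hns
      · rfl
  have hin : ∀ m : {x // x ∈ s1}, (m : MvPolynomial (Fin n) R).coeff α = ord.lc (Q m) := by
    intro m
    rw [← hQ3 m, TermOrder.ltm, MvPolynomial.coeff_monomial, if_pos (hQ4 m)]
  -- the leading coefficient identity
  have hlc : ∑ m ∈ s1.attach, c (m : MvPolynomial (Fin n) R) * ord.lc (Q m) = ord.lc a := by
    have h2 : (c.sum fun mi r => r • mi).coeff α = ∑ m ∈ c.support, c m * m.coeff α := by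
      rw [Finsupp.sum, MvPolynomial.coeff_sum]
      exact Finset.sum_congr rfl fun m _ => by rw [MvPolynomial.coeff_smul]; rfl
    rw [hcsum] at h2
    have h1 : (ord.ltm a).coeff α = ord.lc a := by
      rw [TermOrder.ltm, MvPolynomial.coeff_monomial, if_pos rfl]
    rw [h1] at h2
    have h4 : ∑ m ∈ c.support.filter (fun m => ¬ P m), c m * m.coeff α = 0 := by
      refine Finset.sum_eq_zero fun m hm => ?_
      obtain ⟨hm1, hm2⟩ := Finset.mem_filter.mp hm
      rw [hout m hm1 (fun hh => hm2 (Finset.mem_filter.mp hh).2), mul_zero]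
    have h3 := Finset.sum_filter_add_sum_filter_not c.support P (fun m => c m * m.coeff α)
    rw [h4, add_zero] at h3
    rw [← h3] at h2
    rw [h2, ← Finset.sum_attach s1 (fun m => c m * m.coeff α)]
    exact Finset.sum_congr rfl fun m _ => by rw [hin m]
  -- s1 is nonempty
  have hne : s1.attach.Nonempty :=
    Finset.nonempty_of_sum_ne_zero (s := s1.attach)
      (f := fun m => c m.1 * ord.lc (Q m))
      (by rw [hlc]; exact lc_ne_zero ord h0)
  -- now build the data
  set N := s1.card with hN
  set e : {x // x ∈ s1} ≃ Fin N := s1.equivFin with he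
  refine ⟨N, fun i => c ((e.symm i : {x // x ∈ s1}) : MvPolynomial (Fin n) R),
    fun i => Q (e.symm i), ?_, ?_, ?_⟩
  · rw [hN, Finset.card_pos]
    obtain ⟨m, _⟩ := hne
    exact ⟨(m : MvPolynomial (Fin n) R), m.2⟩
  · exact fun i => ⟨hQ1 _, hQ4 _⟩
  · intro β hβ
    have hsum : (∑ i : Fin N, MvPolynomial.C (c ((e.symm i : {x // x ∈ s1}) :
        MvPolynomial (Fin n) R)) * Q (e.symm i)) =
        ∑ m ∈ s1.attach, MvPolynomial.C (c (m : MvPolynomial (Fin n) R)) * Q m := by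
      rw [← Finset.univ_eq_attach]
      exact Equiv.sum_comp e.symm
        (fun m => MvPolynomial.C (c (m : MvPolynomial (Fin n) R)) * Q m)
    rw [hsum, MvPolynomial.coeff_sub, MvPolynomial.coeff_sum]
    rcases lo_eq_or_lt_of_le ord hβ with rfl | hlt
    · have : ∀ m ∈ s1.attach,
          (MvPolynomial.C (c (m : MvPolynomial (Fin n) R)) * Q m).coeff α =
          c (m : MvPolynomial (Fin n) R) * ord.lc (Q m) := by
        intro m _
        rw [MvPolynomial.coeff_C_mul]
        congr 1
        rw [TermOrder.lc, hQ4 m]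
      rw [Finset.sum_congr rfl this, hlc]
      rw [TermOrder.lc] at *
      rw [sub_eq_zero]
    · have h5 : a.coeff β = 0 := coeff_eq_zero_of_lp_lt ord (hα ▸ hlt)
      have h6 : ∀ m ∈ s1.attach,
          (MvPolynomial.C (c (m : MvPolynomial (Fin n) R)) * Q m).coeff β = 0 := by
        intro m _
        rw [MvPolynomial.coeff_C_mul, coeff_eq_zero_of_lp_lt ord ((hQ4 m).symm ▸ hlt), mul_zero]
      rw [Finset.sum_congr rfl h6, h5, Finset.sum_const_zero, sub_zero]

theorem rep_of_isSAGBI [IsDomain R] {A : Subalgebra R (MvPolynomial (Fin n) R)}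
    {F : Set (MvPolynomial (Fin n) R)} (hFA : F ⊆ (A : Set (MvPolynomial (Fin n) R)))
    (hS : IsSAGBI ord A F) {a : MvPolynomial (Fin n) R} (ha : a ∈ A) (h0 : a ≠ 0) :
    ∃ (N : ℕ) (r : Fin N → R) (q : Fin N → MvPolynomial (Fin n) R),
      (∀ i, IsPowerProduct F (q i)) ∧
      a = ∑ i, MvPolynomial.C (r i) * q i ∧
      (∀ i, ord.lo.le (ord.lp (q i)) (ord.lp a)) ∧
      (∃ i, ord.lp (q i) = ord.lp a) := by
  have main : ∀ α : Fin n →₀ ℕ, ∀ a : MvPolynomial (Fin n) R, a ∈ A → a ≠ 0 →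
      ord.lp a = α →
      ∃ (N : ℕ) (r : Fin N → R) (q : Fin N → MvPolynomial (Fin n) R),
        (∀ i, IsPowerProduct F (q i)) ∧
        a = ∑ i, MvPolynomial.C (r i) * q i ∧
        (∀ i, ord.lo.le (ord.lp (q i)) (ord.lp a)) ∧
        (∃ i, ord.lp (q i) = ord.lp a) := by
    intro α
    refine ord.wf.induction (C := fun α => ∀ a : MvPolynomial (Fin n) R, a ∈ A → a ≠ 0 →
      ord.lp a = α →
      ∃ (N : ℕ) (r : Fin N → R) (q : Fin N → MvPolynomial (Fin n) R),
        (∀ i, IsPowerProduct F (q i)) ∧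
        a = ∑ i, MvPolynomial.C (r i) * q i ∧
        (∀ i, ord.lo.le (ord.lp (q i)) (ord.lp a)) ∧
        (∃ i, ord.lp (q i) = ord.lp a)) α ?_
    clear α
    intro α IH a ha h0 hα
    subst hα
    obtain ⟨N1, r1, q1, hN1, hprops, hcoeff⟩ := key_step ord hS ha h0
    have hsA : (∑ i, MvPolynomial.C (r1 i) * q1 i) ∈ A :=
      sum_mem fun i _ => C_mul_mem (isPP_mem hFA (hprops i).1) (r1 i)
    by_cases hb : a - ∑ i, MvPolynomial.C (r1 i) * q1 i = 0
    · have hsum : a = ∑ i, MvPolynomial.C (r1 i) * q1 i := by rwa [sub_eq_zero] at hb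
      refine ⟨N1, r1, q1, fun i => (hprops i).1, hsum, ?_, ?_⟩
      · intro i
        rw [(hprops i).2]
        exact ord.lo.le_refl _
      · exact ⟨⟨0, hN1⟩, (hprops ⟨0, hN1⟩).2⟩
    · set b := a - ∑ i, MvPolynomial.C (r1 i) * q1 i with hbdef
      have hbA : b ∈ A := A.sub_mem ha hsA
      have hlpb : ord.lo.lt (ord.lp b) (ord.lp a) := by
        refine lo_lt_of_not_le ord ?_
        intro hle
        exact lc_ne_zero ord hb (hcoeff _ hle)
      obtain ⟨N2, r2, q2, hq2pp, hbsum, hq2le, _⟩ := IH (ord.lp b) hlpb b hbA hb rfl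
      refine ⟨N1 + N2, Fin.append r1 r2, Fin.append q1 q2, ?_, ?_, ?_, ?_⟩
      · intro i
        refine Fin.addCases (motive := fun i => IsPowerProduct F (Fin.append q1 q2 i))
          ?_ ?_ i
        · intro j; rw [Fin.append_left]; exact (hprops j).1
        · intro j; rw [Fin.append_right]; exact hq2pp j
      · have hsplit : (∑ i, MvPolynomial.C (Fin.append r1 r2 i) * Fin.append q1 q2 i) =
            (∑ i, MvPolynomial.C (r1 i) * q1 i) + ∑ i, MvPolynomial.C (r2 i) * q2 i := by
          rw [Fin.sum_univ_add]
          congr 1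
          · exact Finset.sum_congr rfl fun j _ => by rw [Fin.append_left, Fin.append_left]
          · exact Finset.sum_congr rfl fun j _ => by rw [Fin.append_right, Fin.append_right]
        rw [hsplit, ← hbsum, hbdef]
        ring
      · intro i
        refine Fin.addCases (motive := fun i =>
          ord.lo.le (ord.lp (Fin.append q1 q2 i)) (ord.lp a)) ?_ ?_ i
        · intro j
          rw [Fin.append_left, (hprops j).2]
          exact ord.lo.le_refl _
        · intro j
          rw [Fin.append_right]
          exact ord.lo.le_trans _ _ _ (hq2le j) (lo_le_of_lt ord hlpb)
      · refine ⟨Fin.castAdd N2 ⟨0, hN1⟩, ?_⟩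
        rw [Fin.append_left]
        exact (hprops ⟨0, hN1⟩).2
  exact main (ord.lp a) a ha h0 rfl

end SagbiAux
/-- `F ⊆ A` is a SAGBI basis for `A` iff every nonzero `a ∈ A` has
a SAGBI representation `a = ∑ rᵢ • F^{eᵢ}` with `maxᵢ lp(F^{eᵢ}) = lp(a)`. -/
theorem isSAGBI_iff_sagbi_representation {n : ℕ} {R : Type*} [CommRing R]
    [IsDomain R] [IsNoetherianRing R] (ord : TermOrder n)
    (A : Subalgebra R (MvPolynomial (Fin n) R)) (F : Set (MvPolynomial (Fin n) R))
    (hFA : F ⊆ (A : Set (MvPolynomial (Fin n) R))) :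
    IsSAGBI ord A F ↔
      ∀ a ∈ A, a ≠ 0 →
        ∃ (N : ℕ) (r : Fin N → R) (q : Fin N → MvPolynomial (Fin n) R),
          (∀ i, IsPowerProduct F (q i)) ∧
          a = ∑ i, MvPolynomial.C (r i) * q i ∧
          (∀ i, ord.lo.le (ord.lp (q i)) (ord.lp a)) ∧
          (∃ i, ord.lp (q i) = ord.lp a) := by
  constructor
  · intro hS a ha h0
    exact SagbiAux.rep_of_isSAGBI ord hFA hS ha h0
  · intro hrep
    unfold IsSAGBI
    apply le_antisymm
    · apply Algebra.adjoin_le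
      rintro x ⟨a, ha, rfl⟩
      by_cases h0 : a = 0
      · subst h0
        rw [SagbiAux.ltm_zero ord]
        exact zero_mem _
      obtain ⟨N, r, q, hpp, hsum, hle, -⟩ := hrep a ha h0
      classical
      have hcoeff : MvPolynomial.coeff (ord.lp a) a =
          ∑ i, r i * MvPolynomial.coeff (ord.lp a) (q i) := by
        have h' := congrArg (MvPolynomial.coeff (ord.lp a)) hsum
        rw [MvPolynomial.coeff_sum] at h'
        rw [h']
        exact Finset.sum_congr rfl fun i _ => by rw [MvPolynomial.coeff_C_mul]
      have hltm : ord.ltm a = ∑ i, MvPolynomial.monomial (ord.lp a)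
          (r i * MvPolynomial.coeff (ord.lp a) (q i)) := by
        rw [TermOrder.ltm, TermOrder.lc, hcoeff]
        exact map_sum (MvPolynomial.monomial (ord.lp a)) _ _
      rw [hltm]
      refine sum_mem fun i _ => ?_
      by_cases hq0 : q i = 0
      · rw [hq0, MvPolynomial.coeff_zero, mul_zero, map_zero]
        exact zero_mem _
      by_cases hlp : ord.lp (q i) = ord.lp a
      · have heq : (MvPolynomial.monomial (ord.lp a))
            (r i * MvPolynomial.coeff (ord.lp a) (q i)) =
            MvPolynomial.C (r i) * ord.ltm (q i) := by
          rw [TermOrder.ltm, TermOrder.lc, hlp, MvPolynomial.C_mul_monomial]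
        rw [heq]
        refine SagbiAux.C_mul_mem ?_ (r i)
        have hcl := SagbiAux.ltm_pp_mem_closure ord (hpp i) hq0
        have hsub : (Submonoid.closure (ord.ltm '' F) : Set (MvPolynomial (Fin n) R)) ⊆
            (Algebra.adjoin R (ord.ltm '' F) : Set (MvPolynomial (Fin n) R)) := by
          intro y hy
          have h2 := Algebra.adjoin_eq_span R (ord.ltm '' F)
          rw [SetLike.mem_coe, ← Subalgebra.mem_toSubmodule, h2]
          exact Submodule.subset_span hy
        exact hsub hcl
      · have hzero : MvPolynomial.coeff (ord.lp a) (q i) = 0 :=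
          SagbiAux.coeff_eq_zero_of_lp_lt ord
            (SagbiAux.lo_lt_of_le_of_ne ord (hle i) hlp)
        rw [hzero, mul_zero, map_zero]
        exact zero_mem _
    · exact Algebra.adjoin_mono (Set.image_mono hFA)
end

section
/- Let F = {f_1, f_2, …} ⊆ R[X] be a set of nonzero polynomials with distinct elements, let Y = {y_1, y_2, …} be variables in bijection with F, let π : R[Y] → R[Lt F] be the evaluation homomorphism y_i ↦ lt(f_i), and let I(Lt F) = ker π. Let {P_j(Y) : j ∈ J} be a set of T_X-homogeneous generators for the ideal I(Lt F) ⊆ R[Y]. Then F is a SAGBI basis for R[F] if and only if for each j ∈ J, the polynomial P_j(F) (obtained from P_j(Y) by substituting f_i for y_i) s-reduces to 0 via F. -/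
open MvPolynomial

variable {n : ℕ} {R : Type*} [CommRing R]

namespace TermOrder

variable {n : ℕ} {R : Type*} [CommRing R]

/-- Type synonym carrying the term order as genuine instances. -/
def Syn {n : ℕ} (_ord : TermOrder n) : Type := Fin n →₀ ℕ

variable (ord : TermOrder n)

/-- The identity map into the synonym type. -/
def toSyn : (Fin n →₀ ℕ) ≃ ord.Syn := Equiv.refl _

instance : LinearOrder ord.Syn := ord.lo
noncomputable instance : AddCancelCommMonoid ord.Syn :=
  { (inferInstance : AddCommMonoid (Fin n →₀ ℕ)) with
    add_left_cancel := fun a => IsLeftCancelAdd.add_left_cancel (G := Fin n →₀ ℕ) a }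
instance : WellFoundedLT ord.Syn := ⟨ord.wf⟩

theorem syn_add (a b : Fin n →₀ ℕ) : ord.toSyn (a + b) = ord.toSyn a + ord.toSyn b := rfl

theorem add_le_add' {a b : ord.Syn} (h : a ≤ b) (c : ord.Syn) : a + c ≤ b + c :=
  ord.add_le_add a b c h

theorem add_lt_add' {a b : ord.Syn} (h : a < b) (c : ord.Syn) : a + c < b + c := by
  rcases lt_iff_le_and_ne.mp h with ⟨hle, hne⟩
  exact lt_iff_le_and_ne.mpr ⟨ord.add_le_add' hle c, fun he => hne (add_right_cancel he)⟩

theorem syn_zero_le (a : ord.Syn) : 0 ≤ a := by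
  set m : ord.Syn := ord.wf.min Set.univ ⟨a, trivial⟩ with hm
  have hmin : ∀ x : ord.Syn, ¬ x < m := fun x => ord.wf.not_lt_min _ (Set.mem_univ x)
  have h0 : (0 : ord.Syn) ≤ m := by
    by_contra h
    rw [not_le] at h
    have := ord.add_lt_add' h m
    rw [zero_add] at this
    exact hmin _ this
  exact le_trans h0 (le_of_not_gt (hmin a))

theorem add_le_add2 {a b c d : ord.Syn} (h1 : a ≤ b) (h2 : c ≤ d) : a + c ≤ b + d := by
  calc a + c ≤ b + c := ord.add_le_add' h1 c
  _ = c + b := add_comm _ _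
  _ ≤ d + b := ord.add_le_add' h2 b
  _ = b + d := add_comm _ _

theorem add_lt_le_add {a b c d : ord.Syn} (h1 : a < b) (h2 : c ≤ d) : a + c < b + d := by
  calc a + c < b + c := ord.add_lt_add' h1 c
  _ = c + b := add_comm _ _
  _ ≤ d + b := ord.add_le_add' h2 b
  _ = b + d := add_comm _ _

/-- the leading exponent, in the synonym type -/
noncomputable def slp (p : MvPolynomial (Fin n) R) : ord.Syn := ord.toSyn (ord.lp p)

/-- the support, as a finset in the synonym type -/
def ssupp (p : MvPolynomial (Fin n) R) : Finset ord.Syn := p.support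

theorem mem_ssupp {p : MvPolynomial (Fin n) R} {β : Fin n →₀ ℕ} :
    ord.toSyn β ∈ ord.ssupp p ↔ p.coeff β ≠ 0 := mem_support_iff

theorem lp_def' (p : MvPolynomial (Fin n) R) :
    ord.lp p = ord.toSyn.symm (WithBot.unbotD 0 ((ord.ssupp p).max)) := rfl

theorem ssupp_nonempty {p : MvPolynomial (Fin n) R} (hp : p ≠ 0) : (ord.ssupp p).Nonempty :=
  Finset.nonempty_iff_ne_empty.mpr (fun h => hp (support_eq_empty.mp (h : p.support = ∅)))

theorem support_max_eq {p : MvPolynomial (Fin n) R} (hp : p ≠ 0) :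
    (ord.ssupp p).max = (ord.slp p : WithBot ord.Syn) := by
  obtain ⟨m, hmem⟩ := Finset.max_of_nonempty (ord.ssupp_nonempty hp)
  rw [hmem]
  congr 1
  show m = WithBot.unbotD 0 ((ord.ssupp p).max)
  rw [hmem]
  rfl

theorem lp_mem_support {p : MvPolynomial (Fin n) R} (hp : p ≠ 0) : ord.lp p ∈ p.support :=
  (Finset.mem_of_max (ord.support_max_eq hp) : ord.slp p ∈ ord.ssupp p)

theorem lc_ne_zero {p : MvPolynomial (Fin n) R} (hp : p ≠ 0) : ord.lc p ≠ 0 := by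
  have := ord.lp_mem_support hp
  rwa [mem_support_iff] at this

theorem le_slp {p : MvPolynomial (Fin n) R} {β : Fin n →₀ ℕ} (h : p.coeff β ≠ 0) :
    ord.toSyn β ≤ ord.slp p := by
  have hp : p ≠ 0 := fun h0 => h (by simp [h0])
  have hmem : ord.toSyn β ∈ ord.ssupp p := (ord.mem_ssupp).mpr h
  have := Finset.le_max hmem
  rw [ord.support_max_eq hp] at this
  exact_mod_cast this

theorem coeff_eq_zero_of_slp_lt {p : MvPolynomial (Fin n) R} {β : Fin n →₀ ℕ}
    (h : ord.slp p < ord.toSyn β) : p.coeff β = 0 := by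
  by_contra hc
  exact absurd (ord.le_slp hc) (not_le.mpr h)

theorem lp_eq_of {p : MvPolynomial (Fin n) R} {d : Fin n →₀ ℕ} (h : p.coeff d ≠ 0)
    (hmax : ∀ β, p.coeff β ≠ 0 → ord.toSyn β ≤ ord.toSyn d) : ord.lp p = d := by
  have hp : p ≠ 0 := fun h0 => h (by simp [h0])
  exact ord.toSyn.injective (le_antisymm (hmax _ (ord.lc_ne_zero hp)) (ord.le_slp h))

theorem lp_zero : ord.lp (0 : MvPolynomial (Fin n) R) = 0 := by
  simp [lp]

end TermOrder

namespace TermOrder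
variable {n : ℕ} {R : Type*} [CommRing R] (ord : TermOrder n)

theorem coeff_mul_lp (p q : MvPolynomial (Fin n) R) :
    (p * q).coeff (ord.lp p + ord.lp q) = ord.lc p * ord.lc q := by
  rw [coeff_mul]
  apply Finset.sum_eq_single_of_mem (ord.lp p, ord.lp q)
    (Finset.HasAntidiagonal.mem_antidiagonal.mpr rfl)
  rintro ⟨a, b⟩ hab hne
  rw [Finset.HasAntidiagonal.mem_antidiagonal] at hab
  by_contra hc
  have ha : p.coeff a ≠ 0 := fun h => hc (by simp [h])
  have hb : q.coeff b ≠ 0 := fun h => hc (by simp [h])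
  have h1 : ord.toSyn a ≤ ord.slp p := ord.le_slp ha
  have h2 : ord.toSyn b ≤ ord.slp q := ord.le_slp hb
  have heq : ord.toSyn a + ord.toSyn b = ord.slp p + ord.slp q := by
    rw [← ord.syn_add]
    exact congrArg ord.toSyn hab
  have : a = ord.lp p ∧ b = ord.lp q := by
    constructor
    · by_contra h
      have hlt : ord.toSyn a < ord.slp p := lt_of_le_of_ne h1
        (fun he => h (ord.toSyn.injective he))
      exact absurd heq (ne_of_lt (ord.add_lt_le_add hlt h2))
    · by_contra h
      have hlt : ord.toSyn b < ord.slp q := lt_of_le_of_ne h2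
        (fun he => h (ord.toSyn.injective he))
      have := ord.add_lt_le_add hlt h1
      rw [add_comm (ord.toSyn b), add_comm (ord.slp q)] at this
      exact absurd heq (ne_of_lt this)
  exact hne (Prod.ext this.1 this.2)

theorem le_slp_mul {p q : MvPolynomial (Fin n) R} {γ : Fin n →₀ ℕ}
    (h : (p * q).coeff γ ≠ 0) : ord.toSyn γ ≤ ord.slp p + ord.slp q := by
  rw [coeff_mul] at h
  obtain ⟨⟨a, b⟩, hab, hne⟩ := Finset.exists_ne_zero_of_sum_ne_zero h
  rw [Finset.HasAntidiagonal.mem_antidiagonal] at hab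
  have ha : p.coeff a ≠ 0 := fun h0 => hne (by simp [h0])
  have hb : q.coeff b ≠ 0 := fun h0 => hne (by simp [h0])
  calc ord.toSyn γ = ord.toSyn a + ord.toSyn b := by rw [← ord.syn_add, hab]
  _ ≤ ord.slp p + ord.slp q := ord.add_le_add2 (ord.le_slp ha) (ord.le_slp hb)

variable [IsDomain R]

theorem lp_mul {p q : MvPolynomial (Fin n) R} (hp : p ≠ 0) (hq : q ≠ 0) :
    ord.lp (p * q) = ord.lp p + ord.lp q := by
  apply ord.lp_eq_of
  · rw [ord.coeff_mul_lp]
    exact mul_ne_zero (ord.lc_ne_zero hp) (ord.lc_ne_zero hq)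
  · intro β hb
    exact ord.le_slp_mul hb

theorem lc_mul {p q : MvPolynomial (Fin n) R} (hp : p ≠ 0) (hq : q ≠ 0) :
    ord.lc (p * q) = ord.lc p * ord.lc q := by
  rw [lc, ord.lp_mul hp hq, ord.coeff_mul_lp]

theorem ltm_mul {p q : MvPolynomial (Fin n) R} (hp : p ≠ 0) (hq : q ≠ 0) :
    ord.ltm (p * q) = ord.ltm p * ord.ltm q := by
  rw [ltm, ltm, ltm, monomial_mul, ord.lp_mul hp hq, ord.lc_mul hp hq]

theorem ltm_ne_zero {p : MvPolynomial (Fin n) R} (hp : p ≠ 0) : ord.ltm p ≠ 0 := by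
  rw [ltm, Ne, monomial_eq_zero]
  exact ord.lc_ne_zero hp

theorem lp_one : ord.lp (1 : MvPolynomial (Fin n) R) = 0 := by
  apply ord.lp_eq_of
  · simp
  · intro β hb
    have hβ : β = 0 := by
      by_contra hβ
      apply hb
      classical
      rw [MvPolynomial.coeff_one]
      simp [hβ, Ne.symm hβ]
    subst hβ
    exact le_refl _

theorem ltm_one : ord.ltm (1 : MvPolynomial (Fin n) R) = 1 := by
  rw [ltm, lp_one, lc, lp_one]
  simp

theorem ltm_prod {ι : Type*} (s : Finset ι) (g : ι → MvPolynomial (Fin n) R)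
    (h : ∀ i ∈ s, g i ≠ 0) :
    ord.ltm (∏ i ∈ s, g i) = ∏ i ∈ s, ord.ltm (g i) := by
  induction s using Finset.cons_induction with
  | empty => simpa using ord.ltm_one
  | cons a s ha ih =>
    rw [Finset.prod_cons, Finset.prod_cons,
      ord.ltm_mul (h a (Finset.mem_cons_self a s))
        (Finset.prod_ne_zero_iff.mpr fun i hi => h i (Finset.mem_cons_of_mem hi)),
      ih (fun i hi => h i (Finset.mem_cons_of_mem hi))]

theorem ltm_pow {p : MvPolynomial (Fin n) R} (hp : p ≠ 0) (k : ℕ) :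
    ord.ltm (p ^ k) = ord.ltm p ^ k := by
  induction k with
  | zero => simpa using ord.ltm_one
  | succ k ih =>
    rw [pow_succ, pow_succ, ord.ltm_mul (pow_ne_zero k hp) hp, ih]

end TermOrder

section Fpow

variable {n : ℕ} {R : Type*} [CommRing R] {ι : Type*}

/-- `F`-power product given by exponent vector `e`. -/
noncomputable def Fpow (f : ι → MvPolynomial (Fin n) R) (e : ι →₀ ℕ) :
    MvPolynomial (Fin n) R :=
  e.prod fun i k => f i ^ k

theorem Fpow_def (f : ι → MvPolynomial (Fin n) R) (e : ι →₀ ℕ) :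
    Fpow f e = ∏ i ∈ e.support, f i ^ e i := rfl

theorem Fpow_ne_zero [IsDomain R] {f : ι → MvPolynomial (Fin n) R} (hnz : ∀ i, f i ≠ 0)
    (e : ι →₀ ℕ) : Fpow f e ≠ 0 :=
  Finset.prod_ne_zero_iff.mpr fun i _ => pow_ne_zero _ (hnz i)

theorem ltm_Fpow [IsDomain R] (ord : TermOrder n) {f : ι → MvPolynomial (Fin n) R}
    (hnz : ∀ i, f i ≠ 0) (e : ι →₀ ℕ) :
    ord.ltm (Fpow f e) = Fpow (fun i => ord.ltm (f i)) e := by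
  rw [Fpow_def, Fpow_def, ord.ltm_prod _ _ (fun i _ => pow_ne_zero _ (hnz i))]
  exact Finset.prod_congr rfl fun i _ => ord.ltm_pow (hnz i) _

theorem Fpow_mem_adjoin (f : ι → MvPolynomial (Fin n) R) (e : ι →₀ ℕ) :
    Fpow f e ∈ Algebra.adjoin R (Set.range f) := by
  rw [Fpow_def]
  exact Subalgebra.prod_mem _ fun i _ =>
    Subalgebra.pow_mem _ (Algebra.subset_adjoin (Set.mem_range_self i)) _

theorem Fpow_add (f : ι → MvPolynomial (Fin n) R) (a b : ι →₀ ℕ) :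
    Fpow f (a + b) = Fpow f a * Fpow f b :=
  Finsupp.prod_add_index' (fun i => pow_zero (f i)) (fun i k l => pow_add (f i) k l)

theorem isPowerProduct_Fpow {f : ι → MvPolynomial (Fin n) R} (hinj : Function.Injective f)
    (e : ι →₀ ℕ) : IsPowerProduct (Set.range f) (Fpow f e) := by
  refine ⟨Finsupp.embDomain ⟨f, hinj⟩ e, ?_, ?_⟩
  · rw [Finsupp.support_embDomain]
    intro x hx
    simp only [Finset.coe_map, Set.mem_image] at hx
    obtain ⟨i, _, rfl⟩ := hx
    exact ⟨i, rfl⟩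
  · rw [Finsupp.prod_embDomain]
    rfl

theorem isPowerProduct_iff {f : ι → MvPolynomial (Fin n) R} (hinj : Function.Injective f)
    {q : MvPolynomial (Fin n) R} (h : IsPowerProduct (Set.range f) q) :
    ∃ e : ι →₀ ℕ, q = Fpow f e := by
  obtain ⟨e', hsupp, rfl⟩ := h
  have hbij : Set.BijOn f (f ⁻¹' ↑e'.support) ↑e'.support := by
    refine ⟨fun x hx => hx, hinj.injOn, fun y hy => ?_⟩
    obtain ⟨i, rfl⟩ := hsupp hy
    exact ⟨i, hy, rfl⟩
  refine ⟨Finsupp.comapDomain f e' hinj.injOn, ?_⟩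
  have he' : Finsupp.embDomain ⟨f, hinj⟩ (Finsupp.comapDomain f e'
      (⟨f, hinj⟩ : _ ↪ _).injective.injOn) = e' :=
    Finsupp.embDomain_comapDomain (f := ⟨f, hinj⟩) hsupp
  conv_lhs => rw [← he']
  rw [Finsupp.prod_embDomain]
  rfl

theorem aeval_eq_sum (f : ι → MvPolynomial (Fin n) R) (Q : MvPolynomial ι R) :
    MvPolynomial.aeval f Q = ∑ e ∈ Q.support, MvPolynomial.C (Q.coeff e) * Fpow f e := by
  rw [MvPolynomial.aeval_def, MvPolynomial.eval₂_eq]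
  exact Finset.sum_congr rfl fun e _ => by rw [MvPolynomial.algebraMap_eq]; rfl

end Fpow

section Chunk3

variable {n : ℕ} {R : Type*} [CommRing R] {ι : Type*}
variable (ord : TermOrder n) (f : ι → MvPolynomial (Fin n) R)

open Classical in
theorem coeff_aeval_ltm [IsDomain R] (hnz : ∀ i, f i ≠ 0) (Q : MvPolynomial ι R)
    (γ : Fin n →₀ ℕ) :
    (MvPolynomial.aeval (fun i => ord.ltm (f i)) Q).coeff γ =
      ∑ e ∈ Q.support.filter (fun e => ord.lp (Fpow f e) = γ),
        Q.coeff e * ord.lc (Fpow f e) := by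
  rw [aeval_eq_sum, MvPolynomial.coeff_sum]
  rw [Finset.sum_filter]
  apply Finset.sum_congr rfl
  intro e _
  rw [show Fpow (fun i => ord.ltm (f i)) e = ord.ltm (Fpow f e) from (ltm_Fpow ord hnz e).symm,
    TermOrder.ltm, MvPolynomial.C_mul_monomial, MvPolynomial.coeff_monomial]

open Classical in
theorem coeff_aeval_top [IsDomain R] (hnz : ∀ i, f i ≠ 0) (Q : MvPolynomial ι R)
    {β : Fin n →₀ ℕ} (hb : ∀ e, Q.coeff e ≠ 0 → ord.slp (Fpow f e) ≤ ord.toSyn β) :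
    (MvPolynomial.aeval f Q).coeff β =
      ∑ e ∈ Q.support.filter (fun e => ord.lp (Fpow f e) = β),
        Q.coeff e * ord.lc (Fpow f e) := by
  rw [aeval_eq_sum, MvPolynomial.coeff_sum, Finset.sum_filter]
  apply Finset.sum_congr rfl
  intro e he
  rw [MvPolynomial.coeff_C_mul]
  split_ifs with h
  · rw [← h]; rfl
  · rw [ord.coeff_eq_zero_of_slp_lt, mul_zero]
    exact lt_of_le_of_ne (hb e (MvPolynomial.mem_support_iff.mp he))
      (fun he2 => h (ord.toSyn.injective he2))

theorem dom_aeval (Q : MvPolynomial ι R) {β : Fin n →₀ ℕ}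
    (hb : ∀ e, Q.coeff e ≠ 0 → ord.slp (Fpow f e) ≤ ord.toSyn β)
    {γ : Fin n →₀ ℕ} (h : (MvPolynomial.aeval f Q).coeff γ ≠ 0) :
    ord.toSyn γ ≤ ord.toSyn β := by
  rw [aeval_eq_sum, MvPolynomial.coeff_sum] at h
  obtain ⟨e, he, hne⟩ := Finset.exists_ne_zero_of_sum_ne_zero h
  rw [MvPolynomial.coeff_C_mul] at hne
  have h2 : (Fpow f e).coeff γ ≠ 0 := fun h0 => hne (by rw [h0, mul_zero])
  exact le_trans (ord.le_slp h2) (hb e (MvPolynomial.mem_support_iff.mp he))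

theorem sstep_sub [IsDomain R] (hinj : Function.Injective f) (hnz : ∀ i, f i ≠ 0)
    (S : Finset (ι →₀ ℕ)) (c : (ι →₀ ℕ) → R) (h : MvPolynomial (Fin n) R) (β : Fin n →₀ ℕ)
    (hS : ∀ e ∈ S, ord.lp (Fpow f e) = β)
    (hco : h.coeff β = ∑ e ∈ S, c e * ord.lc (Fpow f e))
    (hne : h.coeff β ≠ 0) :
    SStep ord (Set.range f) h (h - ∑ e ∈ S, MvPolynomial.C (c e) * Fpow f e) := by
  refine ⟨β, S.card, fun i => Fpow f ((S.equivFin.symm i : S) : ι →₀ ℕ),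
    fun i => c ((S.equivFin.symm i : S) : ι →₀ ℕ), hne, ?_, ?_, ?_⟩
  · intro i
    exact ⟨isPowerProduct_Fpow hinj _, Fpow_ne_zero hnz _,
      hS _ (Finset.coe_mem _)⟩
  · rw [hco]
    rw [← Finset.sum_coe_sort S (fun e => c e * ord.lc (Fpow f e))]
    exact (Equiv.sum_comp S.equivFin.symm
      (fun x : S => c (x : ι →₀ ℕ) * ord.lc (Fpow f (x : ι →₀ ℕ)))).symm
  · congr 1
    rw [← Finset.sum_coe_sort S (fun e => MvPolynomial.C (c e) * Fpow f e)]
    exact (Equiv.sum_comp S.equivFin.symm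
      (fun x : S => MvPolynomial.C (c (x : ι →₀ ℕ)) * Fpow f (x : ι →₀ ℕ))).symm

theorem sub_lt_top (S : Finset (ι →₀ ℕ)) (c : (ι →₀ ℕ) → R) (h : MvPolynomial (Fin n) R)
    (β : Fin n →₀ ℕ)
    (hS : ∀ e ∈ S, ord.lp (Fpow f e) = β)
    (hco : h.coeff β = ∑ e ∈ S, c e * ord.lc (Fpow f e))
    (hdom : ∀ γ, h.coeff γ ≠ 0 → ord.toSyn γ ≤ ord.toSyn β) :
    h - ∑ e ∈ S, MvPolynomial.C (c e) * Fpow f e = 0 ∨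
      ord.slp (h - ∑ e ∈ S, MvPolynomial.C (c e) * Fpow f e) < ord.toSyn β := by
  set h' := h - ∑ e ∈ S, MvPolynomial.C (c e) * Fpow f e with hh'
  have key : ∀ γ, h'.coeff γ ≠ 0 → ord.toSyn γ < ord.toSyn β := by
    intro γ hγ
    have hc' : h'.coeff γ = h.coeff γ - ∑ e ∈ S, c e * (Fpow f e).coeff γ := by
      rw [hh', MvPolynomial.coeff_sub, MvPolynomial.coeff_sum]
      congr 1
      exact Finset.sum_congr rfl fun e _ => MvPolynomial.coeff_C_mul _ _ _
    rcases eq_or_ne γ β with rfl | hne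
    · exfalso
      apply hγ
      rw [hc', hco]
      rw [sub_eq_zero]
      exact Finset.sum_congr rfl fun e he => by rw [← hS e he]; rfl
    · rcases lt_or_ge (ord.toSyn γ) (ord.toSyn β) with hlt | hge
      · exact hlt
      exfalso
      apply hγ
      have h1 : h.coeff γ = 0 := by
        by_contra h0
        exact hne (ord.toSyn.injective (le_antisymm (hdom γ h0) hge))
      have hgt : ord.toSyn β < ord.toSyn γ :=
        lt_of_le_of_ne hge (fun he => hne (ord.toSyn.injective he.symm))
      rw [hc', h1, zero_sub, neg_eq_zero]
      apply Finset.sum_eq_zero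
      intro e he
      rw [ord.coeff_eq_zero_of_slp_lt, mul_zero]
      rw [TermOrder.slp, hS e he]
      exact hgt
  rcases eq_or_ne h' 0 with h0 | h0
  · exact Or.inl h0
  · exact Or.inr (key _ (ord.lc_ne_zero h0))

end Chunk3

section Chunk45

variable {n : ℕ} {R : Type*} [CommRing R] [IsDomain R] {ι : Type*}
variable (ord : TermOrder n) {f : ι → MvPolynomial (Fin n) R}

theorem mem_sreduce_zero (hinj : Function.Injective f) (hnz : ∀ i, f i ≠ 0)
    (hS : IsSAGBI ord (Algebra.adjoin R (Set.range f)) (Set.range f)) :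
    ∀ h ∈ Algebra.adjoin R (Set.range f), SReduce ord (Set.range f) h 0 := by
  classical
  have main : ∀ d : ord.Syn, ∀ h ∈ Algebra.adjoin R (Set.range f), ord.slp h = d →
      SReduce ord (Set.range f) h 0 := by
    intro d
    refine WellFounded.induction (C := fun d : ord.Syn => ∀ h ∈ Algebra.adjoin R
      (Set.range f), ord.slp h = d → SReduce ord (Set.range f) h 0) wellFounded_lt d ?_
    intro d IH h hmem hlp
    rcases eq_or_ne h 0 with rfl | hne
    · exact Relation.ReflTransGen.refl
    have h1 : ord.ltm h ∈ Algebra.adjoin R (ord.ltm '' (Set.range f)) := by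
      rw [← hS]
      exact Algebra.subset_adjoin ⟨h, hmem, rfl⟩
    rw [show ord.ltm '' (Set.range f) = Set.range (fun i => ord.ltm (f i)) from
      (Set.range_comp _ _).symm, Algebra.adjoin_range_eq_range_aeval] at h1
    obtain ⟨Q, hQ0⟩ := h1
    have hQ : MvPolynomial.aeval (fun i => ord.ltm (f i)) Q = ord.ltm h := hQ0
    set β := ord.lp h with hβ
    have hco : h.coeff β = ∑ e ∈ Q.support.filter (fun e => ord.lp (Fpow f e) = β),
        Q.coeff e * ord.lc (Fpow f e) := by
      rw [← coeff_aeval_ltm ord f hnz Q β, hQ]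
      rw [TermOrder.ltm, MvPolynomial.coeff_monomial, if_pos rfl]
      rfl
    have hS' : ∀ e ∈ Q.support.filter (fun e => ord.lp (Fpow f e) = β),
        ord.lp (Fpow f e) = β := fun e he => (Finset.mem_filter.mp he).2
    have hcne : h.coeff β ≠ 0 := ord.lc_ne_zero hne
    have hstep := sstep_sub ord f hinj hnz _ Q.coeff h β hS' hco hcne
    have hdom : ∀ γ, h.coeff γ ≠ 0 → ord.toSyn γ ≤ ord.toSyn β := fun γ hγ => ord.le_slp hγ
    have hlt := sub_lt_top ord f _ Q.coeff h β hS' hco hdom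
    set h' := h - ∑ e ∈ Q.support.filter (fun e => ord.lp (Fpow f e) = β),
      MvPolynomial.C (Q.coeff e) * Fpow f e with hh'
    have hmem' : h' ∈ Algebra.adjoin R (Set.range f) := by
      refine Subalgebra.sub_mem _ hmem (Subalgebra.sum_mem _ fun e _ => ?_)
      rw [← MvPolynomial.smul_eq_C_mul]
      exact Subalgebra.smul_mem _ (Fpow_mem_adjoin f e) _
    rcases hlt with h0 | hlt
    · rw [← h0]
      exact Relation.ReflTransGen.single hstep
    · refine Relation.ReflTransGen.head hstep ?_
      have hlt' : ord.slp h' < d := by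
        rw [← hlp]
        exact hlt
      exact IH _ hlt' h' hmem' rfl
  exact fun h hmem => main (ord.slp h) h hmem rfl

theorem ltm_mem_of_sreduce (hinj : Function.Injective f) (hnz : ∀ i, f i ≠ 0)
    {g : MvPolynomial (Fin n) R} (hred : SReduce ord (Set.range f) g 0) :
    ∀ γ, g.coeff γ ≠ 0 → (∀ δ, g.coeff δ ≠ 0 → ord.toSyn δ ≤ ord.toSyn γ) →
    (MvPolynomial.monomial γ (g.coeff γ)) ∈
      Algebra.adjoin R (ord.ltm '' (Set.range f)) := by
  induction hred using Relation.ReflTransGen.head_induction_on with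
  | refl =>
    intro γ h
    simp at h
  | @head a c step tail IH =>
    intro γ hγ hdom
    obtain ⟨β, N, q, r, hβ, hq, hsum, hsub⟩ := step
    rcases eq_or_ne β γ with rfl | hne
    · -- top case
      have : (MvPolynomial.monomial β (a.coeff β) : MvPolynomial (Fin n) R) =
          ∑ i, MvPolynomial.C (r i) * ord.ltm (q i) := by
        rw [hsum, map_sum]
        refine Finset.sum_congr rfl fun i _ => ?_
        rw [TermOrder.ltm, MvPolynomial.C_mul_monomial, (hq i).2.2]
      rw [this]
      refine Subalgebra.sum_mem _ fun i _ => ?_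
      rw [← MvPolynomial.smul_eq_C_mul]
      refine Subalgebra.smul_mem _ ?_ _
      obtain ⟨e, he⟩ := isPowerProduct_iff hinj (hq i).1
      rw [he, ltm_Fpow ord hnz e,
        show ord.ltm '' (Set.range f) = Set.range (fun i => ord.ltm (f i)) from
          (Set.range_comp _ _).symm]
      exact Fpow_mem_adjoin _ e
    · -- lower case
      have hblt : ord.toSyn β < ord.toSyn γ :=
        lt_of_le_of_ne (hdom β hβ) (fun he => hne (ord.toSyn.injective he))
      have hcq : ∀ i, (q i).coeff γ = 0 := by
        intro i
        apply ord.coeff_eq_zero_of_slp_lt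
        rw [TermOrder.slp, (hq i).2.2]
        exact hblt
      have hceq : c.coeff γ = a.coeff γ := by
        rw [hsub, MvPolynomial.coeff_sub, MvPolynomial.coeff_sum]
        rw [Finset.sum_eq_zero fun i _ => by
          rw [MvPolynomial.coeff_C_mul, hcq i, mul_zero], sub_zero]
      have hdom' : ∀ δ, c.coeff δ ≠ 0 → ord.toSyn δ ≤ ord.toSyn γ := by
        intro δ hδ
        by_contra hgt
        rw [not_le] at hgt
        apply hδ
        rw [hsub, MvPolynomial.coeff_sub, MvPolynomial.coeff_sum]
        have h1 : a.coeff δ = 0 := by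
          by_contra h0
          exact absurd (hdom δ h0) (not_le.mpr hgt)
        rw [h1, Finset.sum_eq_zero, sub_zero]
        intro i _
        rw [MvPolynomial.coeff_C_mul, ord.coeff_eq_zero_of_slp_lt, mul_zero]
        rw [TermOrder.slp, (hq i).2.2]
        exact lt_trans hblt hgt
      have := IH γ (by rw [hceq]; exact hγ) hdom'
      rw [hceq] at this
      exact this

theorem rep_of_sreduce (hinj : Function.Injective f) (hnz : ∀ i, f i ≠ 0)
    {g : MvPolynomial (Fin n) R} (hred : SReduce ord (Set.range f) g 0) :
    ∀ γ : ord.Syn, (∀ δ, g.coeff δ ≠ 0 → ord.toSyn δ ≤ γ) →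
    ∃ Q : MvPolynomial ι R, MvPolynomial.aeval f Q = g ∧
      ∀ e, Q.coeff e ≠ 0 → ord.slp (Fpow f e) ≤ γ := by
  classical
  induction hred using Relation.ReflTransGen.head_induction_on with
  | refl =>
    intro γ _
    exact ⟨0, map_zero _, fun e he => absurd rfl he⟩
  | @head a c step tail IH =>
    intro γ hdom
    obtain ⟨β, N, q, r, hβ, hq, hsum, hsub⟩ := step
    have hβγ : ord.toSyn β ≤ γ := hdom β hβ
    have hslpq : ∀ i, ord.slp (q i) = ord.toSyn β := by
      intro i
      rw [TermOrder.slp, (hq i).2.2]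
    have hdom' : ∀ δ, c.coeff δ ≠ 0 → ord.toSyn δ ≤ γ := by
      intro δ hδ
      by_contra hgt
      rw [not_le] at hgt
      apply hδ
      rw [hsub, MvPolynomial.coeff_sub, MvPolynomial.coeff_sum]
      have h1 : a.coeff δ = 0 := by
        by_contra h0
        exact absurd (hdom δ h0) (not_le.mpr hgt)
      rw [h1, Finset.sum_eq_zero, sub_zero]
      intro i _
      rw [MvPolynomial.coeff_C_mul, ord.coeff_eq_zero_of_slp_lt, mul_zero]
      rw [hslpq i]
      exact lt_of_le_of_lt hβγ hgt
    obtain ⟨Qc, hQc, hQcb⟩ := IH γ hdom'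
    choose e he using fun i => isPowerProduct_iff hinj (hq i).1
    refine ⟨Qc + ∑ i, MvPolynomial.monomial (e i) (r i), ?_, ?_⟩
    · rw [map_add, map_sum, hQc]
      have : ∀ i, MvPolynomial.aeval f (MvPolynomial.monomial (e i) (r i)) =
          MvPolynomial.C (r i) * q i := by
        intro i
        rw [MvPolynomial.aeval_monomial, MvPolynomial.algebraMap_eq, he]
        rfl
      rw [Finset.sum_congr rfl fun i _ => this i, hsub]
      ring
    · intro e0 hne
      by_cases h0 : Qc.coeff e0 ≠ 0
      · exact hQcb e0 h0
      rw [not_not] at h0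
      have h2 : (∑ i, MvPolynomial.monomial (e i) (r i) : MvPolynomial ι R).coeff e0 ≠ 0 := by
        intro hz
        apply hne
        rw [MvPolynomial.coeff_add, h0, hz, add_zero]
      rw [MvPolynomial.coeff_sum] at h2
      obtain ⟨i, _, hne2⟩ := Finset.exists_ne_zero_of_sum_ne_zero h2
      have : e i = e0 := by
        by_contra hc
        rw [MvPolynomial.coeff_monomial, if_neg hc] at hne2
        exact hne2 rfl
      rw [← this, ← he i, hslpq i]
      exact hβγ

end Chunk45

section Chunk6a

variable {n : ℕ} {R : Type*} [CommRing R] {ι : Type*}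

open Classical in
/-- The `T_X`-homogeneous component of degree `γ` (w.r.t. `lp ∘ Fpow f`). -/
noncomputable def hcomp (ord : TermOrder n) (f : ι → MvPolynomial (Fin n) R)
    (γ : Fin n →₀ ℕ) (q : MvPolynomial ι R) : MvPolynomial ι R :=
  AddMonoidAlgebra.ofCoeff (Finsupp.filter (fun e => ord.lp (Fpow f e) = γ) (AddMonoidAlgebra.coeff q))

variable (ord : TermOrder n) (f : ι → MvPolynomial (Fin n) R)

open Classical in
theorem hcomp_coeff (γ : Fin n →₀ ℕ) (q : MvPolynomial ι R) (e : ι →₀ ℕ) :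
    (hcomp ord f γ q).coeff e = if ord.lp (Fpow f e) = γ then q.coeff e else 0 := rfl

open Classical in
theorem hcomp_support (γ : Fin n →₀ ℕ) (q : MvPolynomial ι R) :
    (hcomp ord f γ q).support = q.support.filter (fun e => ord.lp (Fpow f e) = γ) :=
  Finsupp.support_filter _ _

theorem hcomp_add (γ : Fin n →₀ ℕ) (x y : MvPolynomial ι R) :
    hcomp ord f γ (x + y) = hcomp ord f γ x + hcomp ord f γ y := by
  apply MvPolynomial.ext
  intro e
  rw [hcomp_coeff, MvPolynomial.coeff_add, MvPolynomial.coeff_add, hcomp_coeff, hcomp_coeff]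
  split_ifs <;> simp

theorem hcomp_zero (γ : Fin n →₀ ℕ) : hcomp ord f γ (0 : MvPolynomial ι R) = 0 := by
  apply MvPolynomial.ext
  intro e
  rw [hcomp_coeff]
  split_ifs <;> simp

theorem hcomp_sum {κ : Type*} (γ : Fin n →₀ ℕ) (s : Finset κ) (g : κ → MvPolynomial ι R) :
    hcomp ord f γ (∑ j ∈ s, g j) = ∑ j ∈ s, hcomp ord f γ (g j) := by
  induction s using Finset.cons_induction with
  | empty => simpa using hcomp_zero ord f γ
  | cons a s ha ih => rw [Finset.sum_cons, Finset.sum_cons, hcomp_add, ih]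

theorem hcomp_of_all (γ : Fin n →₀ ℕ) {x : MvPolynomial ι R}
    (h : ∀ e, x.coeff e ≠ 0 → ord.lp (Fpow f e) = γ) : hcomp ord f γ x = x := by
  apply MvPolynomial.ext
  intro e
  rw [hcomp_coeff]
  split_ifs with hp
  · rfl
  · rcases eq_or_ne (x.coeff e) 0 with h0 | h0
    · rw [h0]
    · exact absurd (h e h0) hp

theorem hcomp_of_none (γ : Fin n →₀ ℕ) {x : MvPolynomial ι R} {δ : Fin n →₀ ℕ}
    (h : ∀ e, x.coeff e ≠ 0 → ord.lp (Fpow f e) = δ) (hne : δ ≠ γ) : hcomp ord f γ x = 0 := by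
  apply MvPolynomial.ext
  intro e
  rw [hcomp_coeff, MvPolynomial.coeff_zero]
  split_ifs with hp
  · rcases eq_or_ne (x.coeff e) 0 with h0 | h0
    · exact h0
    · exact absurd (hp ▸ h e h0 : (γ : Fin n →₀ ℕ) = δ).symm hne
  · rfl

open Classical in
theorem hcomp_eq_sum (γ : Fin n →₀ ℕ) (q : MvPolynomial ι R) :
    hcomp ord f γ q = ∑ e ∈ q.support.filter (fun e => ord.lp (Fpow f e) = γ),
      MvPolynomial.monomial e (q.coeff e) := by
  apply MvPolynomial.ext
  intro e0
  rw [hcomp_coeff, MvPolynomial.coeff_sum]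
  rw [Finset.sum_congr rfl (fun e _ => MvPolynomial.coeff_monomial e0 e (q.coeff e)),
    Finset.sum_ite_eq' _ e0 (fun e => q.coeff e)]
  by_cases hp : ord.lp (Fpow f e0) = γ
  · rw [if_pos hp]
    by_cases hm : e0 ∈ q.support.filter (fun e => ord.lp (Fpow f e) = γ)
    · rw [if_pos hm]
    · rw [if_neg hm]
      by_contra h0
      exact hm (Finset.mem_filter.mpr
        ⟨MvPolynomial.mem_support_iff.mpr h0, hp⟩)
  · have hm' : e0 ∉ q.support.filter (fun e => ord.lp (Fpow f e) = γ) :=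
      fun hm => hp (Finset.mem_filter.mp hm).2
    rw [if_neg hp, if_neg hm']

open Classical in
/-- filter of coefficient polynomial, as MvPolynomial -/
noncomputable def wfilter (δ γ : Fin n →₀ ℕ) (c : MvPolynomial ι R) : MvPolynomial ι R :=
  AddMonoidAlgebra.ofCoeff (Finsupp.filter (fun a => ord.lp (Fpow f a) + δ = γ) (AddMonoidAlgebra.coeff c))

theorem wfilter_coeff (δ γ : Fin n →₀ ℕ) (c : MvPolynomial ι R) (a : ι →₀ ℕ) :
    (wfilter ord f δ γ c).coeff a = if ord.lp (Fpow f a) + δ = γ then c.coeff a else 0 := rfl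

variable {f}

theorem slp_Fpow_add [IsDomain R] (hnz : ∀ i, f i ≠ 0) (a b : ι →₀ ℕ) :
    ord.slp (Fpow f (a + b)) = ord.slp (Fpow f a) + ord.slp (Fpow f b) := by
  rw [TermOrder.slp, Fpow_add, ord.lp_mul (Fpow_ne_zero hnz a) (Fpow_ne_zero hnz b)]
  rfl

theorem hcomp_mul_homog [IsDomain R] (hnz : ∀ i, f i ≠ 0)
    (c p : MvPolynomial ι R) {δ : Fin n →₀ ℕ}
    (hp : ∀ e, p.coeff e ≠ 0 → ord.lp (Fpow f e) = δ) (γ : Fin n →₀ ℕ) :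
    hcomp ord f γ (c * p) = wfilter ord f δ γ c * p := by
  classical
  induction c using MvPolynomial.induction_on' with
  | add c1 c2 ih1 ih2 =>
    rw [add_mul, hcomp_add, ih1, ih2, ← add_mul]
    congr 1
    apply MvPolynomial.ext
    intro a
    rw [MvPolynomial.coeff_add, wfilter_coeff, wfilter_coeff, wfilter_coeff, MvPolynomial.coeff_add]
    split_ifs <;> simp
  | monomial a r =>
    have hmono : ∀ e, (MvPolynomial.monomial a r * p).coeff e ≠ 0 →
        ord.lp (Fpow f e) = ord.lp (Fpow f a) + δ := by
      intro e he
      have hsup : e ∈ (MvPolynomial.monomial a r * p).support :=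
        MvPolynomial.mem_support_iff.mpr he
      have h2 := MvPolynomial.support_mul _ _ hsup
      rw [Finset.mem_add] at h2
      obtain ⟨u, hu, v, hv, rfl⟩ := h2
      have hu' : u = a := by
        have h3 := MvPolynomial.mem_support_iff.mp hu
        rw [MvPolynomial.coeff_monomial] at h3
        by_contra hne
        rw [if_neg (fun h => hne h.symm)] at h3
        exact h3 rfl
      subst hu'
      rw [Fpow_add, ord.lp_mul (Fpow_ne_zero hnz u) (Fpow_ne_zero hnz v),
        hp v (MvPolynomial.mem_support_iff.mp hv)]
    by_cases hpred : ord.lp (Fpow f a) + δ = γ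
    · have h1 : wfilter ord f δ γ (MvPolynomial.monomial a r) = MvPolynomial.monomial a r := by
        apply MvPolynomial.ext
        intro a'
        rw [wfilter_coeff]
        split_ifs with h
        · rfl
        · rw [MvPolynomial.coeff_monomial]
          rw [if_neg (fun he : a = a' => h (he ▸ hpred))]
      rw [h1]
      exact hcomp_of_all ord f γ (fun e he => (hmono e he).trans hpred)
    · have h1 : wfilter ord f δ γ (MvPolynomial.monomial a r) = 0 := by
        apply MvPolynomial.ext
        intro a'
        rw [wfilter_coeff, MvPolynomial.coeff_zero]
        split_ifs with h
        · rw [MvPolynomial.coeff_monomial]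
          rw [if_neg (fun he : a = a' => hpred (he ▸ h))]
        · rfl
      rw [h1, zero_mul]
      exact hcomp_of_none ord f γ hmono hpred

end Chunk6a

section Chunk6b

variable {n : ℕ} {R : Type*} [CommRing R] [IsDomain R] {ι : Type*} {J : Type*}
variable (ord : TermOrder n) {f : ι → MvPolynomial (Fin n) R}

theorem bwd_main (hinj : Function.Injective f) (hnz : ∀ i, f i ≠ 0)
    (P : J → MvPolynomial ι R)
    (hgen : Ideal.span (Set.range P) =
      RingHom.ker ((MvPolynomial.aeval fun i => ord.ltm (f i) :
        MvPolynomial ι R →ₐ[R] MvPolynomial (Fin n) R)))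
    (hhom : ∀ j, ∀ a ∈ (P j).support, ∀ b ∈ (P j).support,
      ord.lp (a.prod fun i k => f i ^ k) = ord.lp (b.prod fun i k => f i ^ k))
    (hred : ∀ j, SReduce ord (Set.range f) (MvPolynomial.aeval f (P j)) 0) :
    ∀ (d : ord.Syn) (Q : MvPolynomial ι R),
      (∀ e, Q.coeff e ≠ 0 → ord.slp (Fpow f e) ≤ d) →
      SReduce ord (Set.range f) (MvPolynomial.aeval f Q) 0 := by
  classical
  have hker : ∀ j, MvPolynomial.aeval (fun i => ord.ltm (f i)) (P j) = 0 := by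
    intro j
    have h1 : P j ∈ RingHom.ker ((MvPolynomial.aeval fun i => ord.ltm (f i) :
        MvPolynomial ι R →ₐ[R] MvPolynomial (Fin n) R)) := by
      rw [← hgen]
      exact Ideal.subset_span (Set.mem_range_self j)
    exact RingHom.mem_ker.mp h1
  have hhom' : ∀ j, ∀ a ∈ (P j).support, ∀ b ∈ (P j).support,
      ord.lp (Fpow f a) = ord.lp (Fpow f b) := hhom
  -- strictly reduced representations of the relations
  have hQj : ∀ j, ∃ Qj : MvPolynomial ι R,
      MvPolynomial.aeval f Qj = MvPolynomial.aeval f (P j) ∧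
      ∀ b, Qj.coeff b ≠ 0 → ∃ e', (P j).coeff e' ≠ 0 ∧
        ord.slp (Fpow f b) < ord.slp (Fpow f e') := by
    intro j
    rcases eq_or_ne (MvPolynomial.aeval f (P j)) 0 with h0 | h0
    · exact ⟨0, by rw [map_zero, h0], fun b hb => absurd rfl hb⟩
    have hstrict : ∀ δ, (MvPolynomial.aeval f (P j)).coeff δ ≠ 0 →
        ∀ e', (P j).coeff e' ≠ 0 → ord.toSyn δ < ord.slp (Fpow f e') := by
      intro δ hδ e' he'
      have hbnd : ∀ e, (P j).coeff e ≠ 0 →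
          ord.slp (Fpow f e) ≤ ord.toSyn (ord.lp (Fpow f e')) := by
        intro e he
        rw [TermOrder.slp, hhom' j e (MvPolynomial.mem_support_iff.mpr he) e'
          (MvPolynomial.mem_support_iff.mpr he')]
      have hle := dom_aeval ord f (P j) hbnd hδ
      have htop : (MvPolynomial.aeval f (P j)).coeff (ord.lp (Fpow f e')) = 0 := by
        rw [coeff_aeval_top ord f hnz (P j) hbnd,
          ← coeff_aeval_ltm ord f hnz (P j), hker j, MvPolynomial.coeff_zero]
      refine lt_of_le_of_ne hle (fun heq => ?_)
      have h2 : δ = ord.lp (Fpow f e') := ord.toSyn.injective heq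
      rw [h2] at hδ
      exact hδ htop
    obtain ⟨Qj, hQj1, hQj2⟩ := rep_of_sreduce ord hinj hnz (hred j)
      (ord.slp (MvPolynomial.aeval f (P j))) (fun δ hδ => ord.le_slp hδ)
    refine ⟨Qj, hQj1, fun b hb => ?_⟩
    have hPne : P j ≠ 0 := by
      intro h1
      rw [h1, map_zero] at h0
      exact h0 rfl
    obtain ⟨e', he'⟩ := MvPolynomial.ne_zero_iff.mp hPne
    exact ⟨e', he', lt_of_le_of_lt (hQj2 b hb)
      (hstrict (ord.lp (MvPolynomial.aeval f (P j))) (ord.lc_ne_zero h0) e' he')⟩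
  choose QQ hQQ1 hQQ2 using hQj
  -- degrees of the relations
  have hδ : ∀ j, ∃ δ : Fin n →₀ ℕ, ∀ e, (P j).coeff e ≠ 0 → ord.lp (Fpow f e) = δ := by
    intro j
    rcases eq_or_ne (P j) 0 with h0 | h0
    · refine ⟨0, fun e he => ?_⟩
      rw [h0, MvPolynomial.coeff_zero] at he
      exact absurd rfl he
    · obtain ⟨e0, he0⟩ := MvPolynomial.ne_zero_iff.mp h0
      exact ⟨ord.lp (Fpow f e0), fun e he => hhom' j e (MvPolynomial.mem_support_iff.mpr he)
        e0 (MvPolynomial.mem_support_iff.mpr he0)⟩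
  choose δP hδP using hδ
  -- main well-founded induction
  intro d
  refine WellFounded.induction (C := fun d : ord.Syn => ∀ Q : MvPolynomial ι R,
      (∀ e, Q.coeff e ≠ 0 → ord.slp (Fpow f e) ≤ d) →
      SReduce ord (Set.range f) (MvPolynomial.aeval f Q) 0) wellFounded_lt d ?_
  intro d IH Q hb
  set β : Fin n →₀ ℕ := ord.toSyn.symm d with hβdef
  have hβd : ord.toSyn β = d := ord.toSyn.apply_symm_apply d
  -- auxiliary: strictly lower representations reduce to zero
  have aux : ∀ Q' : MvPolynomial ι R,
      (∀ e, Q'.coeff e ≠ 0 → ord.slp (Fpow f e) < d) →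
      SReduce ord (Set.range f) (MvPolynomial.aeval f Q') 0 := by
    intro Q' hQ'
    rcases eq_or_ne Q' 0 with rfl | hne
    · rw [map_zero]
      exact Relation.ReflTransGen.refl
    · have hsupne : Q'.support.Nonempty := by
        rw [Finset.nonempty_iff_ne_empty]
        intro h
        exact hne (MvPolynomial.support_eq_empty.mp h)
      set s := Q'.support.image (fun e => ord.slp (Fpow f e)) with hs
      have hsne : s.Nonempty := hsupne.image _
      obtain ⟨e1, he1, he1m⟩ := Finset.mem_image.mp (s.max'_mem hsne)
      refine IH (s.max' hsne) ?_ Q' ?_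
      · rw [← he1m]
        exact hQ' e1 (MvPolynomial.mem_support_iff.mp he1)
      · intro e he
        exact Finset.le_max' s _ (Finset.mem_image_of_mem _
          (MvPolynomial.mem_support_iff.mpr he))
  have hbβ : ∀ e, Q.coeff e ≠ 0 → ord.slp (Fpow f e) ≤ ord.toSyn β := by
    rw [hβd]
    exact hb
  have hco := coeff_aeval_top ord f hnz Q hbβ
  set Qr := Q - hcomp ord f β Q with hQr
  have hQrcoeff : ∀ e, Qr.coeff e ≠ 0 → Q.coeff e ≠ 0 ∧ ord.lp (Fpow f e) ≠ β := by
    intro e he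
    rw [hQr, MvPolynomial.coeff_sub, hcomp_coeff] at he
    split_ifs at he with hp
    · rw [sub_self] at he
      exact absurd rfl he
    · rw [sub_zero] at he
      exact ⟨he, hp⟩
  have hQrlt : ∀ e, Qr.coeff e ≠ 0 → ord.slp (Fpow f e) < d := by
    intro e he
    obtain ⟨h1, h2⟩ := hQrcoeff e he
    refine lt_of_le_of_ne (hb e h1) ?_
    rw [← hβd]
    exact fun hx => h2 (ord.toSyn.injective hx)
  have haQr : MvPolynomial.aeval f Qr = MvPolynomial.aeval f Q -
      ∑ e ∈ Q.support.filter (fun e => ord.lp (Fpow f e) = β),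
        MvPolynomial.C (Q.coeff e) * Fpow f e := by
    rw [hQr, map_sub]
    congr 1
    rw [hcomp_eq_sum, map_sum]
    refine Finset.sum_congr rfl fun e _ => ?_
    rw [MvPolynomial.aeval_monomial, MvPolynomial.algebraMap_eq]
    rfl
  by_cases hc0 : (MvPolynomial.aeval f Q).coeff β = 0
  · -- top part is a homogeneous relation
    have hTsupp : ∀ e, (hcomp ord f β Q).coeff e ≠ 0 →
        ord.lp (Fpow f e) = β ∧ Q.coeff e ≠ 0 := by
      intro e he
      rw [hcomp_coeff] at he
      split_ifs at he with hp
      · exact ⟨hp, he⟩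
      · exact absurd rfl he
    have hTker : MvPolynomial.aeval (fun i => ord.ltm (f i)) (hcomp ord f β Q) = 0 := by
      apply MvPolynomial.ext
      intro γ'
      rw [coeff_aeval_ltm ord f hnz, MvPolynomial.coeff_zero]
      by_cases hγβ : γ' = β
      · rw [hγβ]
        have hset : (hcomp ord f β Q).support.filter (fun e => ord.lp (Fpow f e) = β) =
            Q.support.filter (fun e => ord.lp (Fpow f e) = β) := by
          ext e
          simp only [Finset.mem_filter, MvPolynomial.mem_support_iff, hcomp_coeff]
          constructor
          · rintro ⟨h1, h2⟩
            rw [if_pos h2] at h1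
            exact ⟨h1, h2⟩
          · rintro ⟨h1, h2⟩
            rw [if_pos h2]
            exact ⟨h1, h2⟩
        rw [hset]
        have hsum : ∑ e ∈ Q.support.filter (fun e => ord.lp (Fpow f e) = β),
            (hcomp ord f β Q).coeff e * ord.lc (Fpow f e) =
            ∑ e ∈ Q.support.filter (fun e => ord.lp (Fpow f e) = β),
            Q.coeff e * ord.lc (Fpow f e) := by
          refine Finset.sum_congr rfl fun e he => ?_
          rw [hcomp_coeff, if_pos (Finset.mem_filter.mp he).2]
        rw [hsum, ← hco]
        exact hc0
      · apply Finset.sum_eq_zero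
        intro e he
        exfalso
        have hfil := (Finset.mem_filter.mp he).2
        have hmem := MvPolynomial.mem_support_iff.mp (Finset.mem_filter.mp he).1
        exact hγβ (hfil.symm.trans (hTsupp e hmem).1)
    have hTmem : hcomp ord f β Q ∈
        Submodule.span (MvPolynomial ι R) (Set.range P) := by
      have h1 : hcomp ord f β Q ∈ Ideal.span (Set.range P) := by
        rw [hgen, RingHom.mem_ker]
        exact hTker
      exact h1
    rw [Finsupp.mem_span_range_iff_exists_finsupp] at hTmem
    obtain ⟨w, hw⟩ := hTmem
    have hT : hcomp ord f β Q =
        ∑ j ∈ w.support, wfilter ord f (δP j) β (w j) * P j := by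
      calc hcomp ord f β Q = hcomp ord f β (hcomp ord f β Q) :=
            (hcomp_of_all ord f β (fun e he => (hTsupp e he).1)).symm
        _ = hcomp ord f β (w.sum fun j a => a • P j) := by rw [hw]
        _ = ∑ j ∈ w.support, hcomp ord f β (w j • P j) := by
            rw [Finsupp.sum, hcomp_sum]
        _ = ∑ j ∈ w.support, wfilter ord f (δP j) β (w j) * P j := by
            refine Finset.sum_congr rfl fun j _ => ?_
            rw [smul_eq_mul]
            exact hcomp_mul_homog ord hnz (w j) (P j) (hδP j) β
    set Q'' := Qr + ∑ j ∈ w.support, wfilter ord f (δP j) β (w j) * QQ j with hQ''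
    have haeq : MvPolynomial.aeval f Q = MvPolynomial.aeval f Q'' := by
      conv_lhs => rw [show Q = Qr + hcomp ord f β Q by rw [hQr]; ring]
      rw [hQ'', map_add, map_add, hT, map_sum, map_sum]
      congr 1
      refine Finset.sum_congr rfl fun j _ => ?_
      rw [map_mul, map_mul, hQQ1 j]
    have hQ''lt : ∀ e, Q''.coeff e ≠ 0 → ord.slp (Fpow f e) < d := by
      intro e he
      rw [hQ'', MvPolynomial.coeff_add] at he
      by_cases h1 : Qr.coeff e ≠ 0
      · exact hQrlt e h1
      rw [not_not] at h1
      rw [h1, zero_add, MvPolynomial.coeff_sum] at he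
      obtain ⟨j, hj, hne2⟩ := Finset.exists_ne_zero_of_sum_ne_zero he
      have hsup := MvPolynomial.support_mul _ _ (MvPolynomial.mem_support_iff.mpr hne2)
      rw [Finset.mem_add] at hsup
      obtain ⟨u, hu, v, hv, rfl⟩ := hsup
      have hu' : ord.lp (Fpow f u) + δP j = β := by
        have h3 := MvPolynomial.mem_support_iff.mp hu
        rw [wfilter_coeff] at h3
        by_contra h4
        rw [if_neg h4] at h3
        exact h3 rfl
      obtain ⟨e', he'1, he'2⟩ := hQQ2 j v (MvPolynomial.mem_support_iff.mp hv)
      have hδv : ord.slp (Fpow f v) < ord.toSyn (δP j) := by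
        rw [show (δP j) = ord.lp (Fpow f e') from (hδP j e' he'1).symm]
        exact he'2
      have h6 : (ord.slp (Fpow f u) + ord.toSyn (δP j) : ord.Syn) = d := by
        rw [← hβd, ← hu']
        rfl
      rw [slp_Fpow_add ord hnz, ← h6]
      calc ord.slp (Fpow f u) + ord.slp (Fpow f v)
          = ord.slp (Fpow f v) + ord.slp (Fpow f u) := add_comm _ _
        _ < ord.toSyn (δP j) + ord.slp (Fpow f u) := ord.add_lt_add' hδv _
        _ = ord.slp (Fpow f u) + ord.toSyn (δP j) := add_comm _ _
    rw [haeq]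
    exact aux Q'' hQ''lt
  · -- top coefficient survives: one s-reduction step
    have hS' : ∀ e ∈ Q.support.filter (fun e => ord.lp (Fpow f e) = β),
        ord.lp (Fpow f e) = β := fun e he => (Finset.mem_filter.mp he).2
    have hstep := sstep_sub ord f hinj hnz _ Q.coeff (MvPolynomial.aeval f Q) β hS' hco hc0
    rw [← haQr] at hstep
    exact Relation.ReflTransGen.head hstep (aux Qr hQrlt)

end Chunk6b

/-- SAGBI criterion.  Let `F = (fᵢ)` be distinct nonzero polynomials,
`π : R[Y] → R[Lt F]` the evaluation `yᵢ ↦ lt(fᵢ)`, and `(P_j)` a family of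
`T_X`-homogeneous generators of `I(Lt F) = ker π`.  Then `F` is a SAGBI basis for
`R[F]` iff every `P_j(F)` s-reduces to `0` via `F`. -/
theorem isSAGBI_iff_relations_sreduce_zero {n : ℕ} {R : Type*} [CommRing R]
    [IsDomain R] [IsNoetherianRing R] (ord : TermOrder n)
    {ι : Type*} (f : ι → MvPolynomial (Fin n) R)
    (hinj : Function.Injective f) (hnz : ∀ i, f i ≠ 0)
    {J : Type*} (P : J → MvPolynomial ι R)
    (hgen : Ideal.span (Set.range P) =
      RingHom.ker ((MvPolynomial.aeval fun i => ord.ltm (f i) :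
        MvPolynomial ι R →ₐ[R] MvPolynomial (Fin n) R)))
    (hhom : ∀ j, ∀ a ∈ (P j).support, ∀ b ∈ (P j).support,
      ord.lp (a.prod fun i k => f i ^ k) = ord.lp (b.prod fun i k => f i ^ k)) :
    IsSAGBI ord (Algebra.adjoin R (Set.range f)) (Set.range f) ↔
      ∀ j, SReduce ord (Set.range f) (MvPolynomial.aeval f (P j)) 0 := by
  constructor
  · intro hS j
    apply mem_sreduce_zero ord hinj hnz hS
    rw [Algebra.adjoin_range_eq_range_aeval]
    exact ⟨P j, rfl⟩
  · intro hred
    have hmain := bwd_main ord hinj hnz P hgen hhom hred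
    apply le_antisymm
    · apply Algebra.adjoin_le
      rintro x ⟨h, hmem, rfl⟩
      rcases eq_or_ne h 0 with rfl | hne
      · have h0 : ord.ltm (0 : MvPolynomial (Fin n) R) = 0 := by
          rw [TermOrder.ltm,
            show ord.lc (0 : MvPolynomial (Fin n) R) = 0 from MvPolynomial.coeff_zero _,
            MvPolynomial.monomial_zero]
        rw [h0]
        exact Subalgebra.zero_mem _
      · have hmem' : h ∈ (MvPolynomial.aeval (R := R) f).range := by
          rw [← Algebra.adjoin_range_eq_range_aeval]
          exact hmem
        obtain ⟨Q, hQ0⟩ := hmem'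
        have hQ : MvPolynomial.aeval f Q = h := hQ0
        have hQne : Q.support.Nonempty := by
          rw [Finset.nonempty_iff_ne_empty]
          intro hemp
          apply hne
          rw [← hQ, MvPolynomial.support_eq_empty.mp hemp, map_zero]
        set s := Q.support.image (fun e => ord.slp (Fpow f e)) with hs
        have hsne : s.Nonempty := hQne.image _
        have hred0 : SReduce ord (Set.range f) h 0 := by
          rw [← hQ]
          exact hmain (s.max' hsne) Q (fun e he => Finset.le_max' s _
            (Finset.mem_image_of_mem _ (MvPolynomial.mem_support_iff.mpr he)))
        exact ltm_mem_of_sreduce ord hinj hnz hred0 (ord.lp h) (ord.lc_ne_zero hne)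
          (fun δ hδ => ord.le_slp hδ)
    · exact Algebra.adjoin_mono (Set.image_mono Algebra.subset_adjoin)
end
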